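/- Under the hypotheses of the previous convergence theorem, if moreover sup_{0 ≤ λ ≤ ‖A‖} λ^μ |1 − λ Q_α(λ)| ≤ ω_μ(α) and f = A^μ ω with ‖ω‖ ≤ ρ (A positive self-adjoint compact, spectral power A^μ), then ‖f − Q_α(A) A f‖ ≤ ω_μ(α) · ρ. -/
import Mathlib


open scoped RealInnerProductSpace

theorem regularization_source_condition_bound
    {H : Type*} [NormedAddCommGroup H] [InnerProductSpace ℝ H] [CompleteSpace H]
    (b : HilbertBasis ℕ ℝ H) (A : H →L[ℝ] H) (s : ℕ → ℝ)
    (hs_nonneg : ∀ j, 0 ≤ s j)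
    (hs_eig : ∀ j, A (b j) = s j • b j)
    (hs_le : ∀ j, s j ≤ ‖A‖)
    (hA_selfadj : ∀ x y : H, ⟪A x, y⟫ = ⟪x, A y⟫)
    (Q : ℝ → ℝ → ℝ) (μ ρ : ℝ) (hμ : 0 < μ) (hρ : 0 ≤ ρ)
    (ωμ : ℝ → ℝ)
    (hres : ∀ α : ℝ, ∀ l ∈ Set.Icc (0:ℝ) ‖A‖, l ^ μ * |1 - l * Q α l| ≤ ωμ α)
    (ω f : H) (hω : ‖ω‖ ≤ ρ)
    (hf : f = ∑' j, ((s j) ^ μ * ⟪ω, b j⟫) • b j) :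
    ∀ α : ℝ, ‖f - ∑' j, (Q α (s j) * s j * ⟪f, b j⟫) • b j‖ ≤ ωμ α * ρ := by
  intro α
  have hA0 : (0:ℝ) ∈ Set.Icc (0:ℝ) ‖A‖ := ⟨le_refl 0, norm_nonneg A⟩
  have hωμ0 : 0 ≤ ωμ α := by
    have h := hres α 0 hA0
    rwa [Real.zero_rpow hμ.ne', zero_mul] at h
  -- coefficients of ω
  set a : ℕ → ℝ := fun j => ⟪ω, b j⟫ with ha
  have ha_repr : ∀ j, b.repr ω j = a j := by
    intro j; rw [b.repr_apply_apply, real_inner_comm]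
  have haL : Memℓp a 2 := by
    have h := lp.memℓp (b.repr ω)
    have heq : (⇑(b.repr ω) : ℕ → ℝ) = a := funext ha_repr
    rwa [heq] at h
  have hsum_a : Summable fun j => ‖a j‖ ^ (2:ℝ) := by
    have := haL.summable (p := 2) (by norm_num)
    simpa using this
  -- coefficients of f
  set c : ℕ → ℝ := fun j => (s j) ^ μ * a j with hc
  have habs : ∀ j, ‖c j - Q α (s j) * s j * c j‖ ≤ ωμ α * ‖a j‖ := by
    intro j
    have hsj : s j ∈ Set.Icc (0:ℝ) ‖A‖ := ⟨hs_nonneg j, hs_le j⟩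
    have h := hres α (s j) hsj
    have : c j - Q α (s j) * s j * c j = ((s j) ^ μ * |1 - s j * Q α (s j)|) *
        (if 0 ≤ 1 - s j * Q α (s j) then a j else -a j) := by
      rcases le_or_gt 0 (1 - s j * Q α (s j)) with hpos | hneg
      · rw [if_pos hpos, abs_of_nonneg hpos]; simp only [hc]; ring
      · rw [if_neg (not_le.mpr hneg), abs_of_neg hneg]; simp only [hc]; ring
    rw [this, norm_mul]
    have h1 : ‖(if 0 ≤ 1 - s j * Q α (s j) then a j else -a j)‖ = ‖a j‖ := by
      split <;> simp
    rw [h1]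
    apply mul_le_mul_of_nonneg_right _ (norm_nonneg _)
    calc ‖(s j) ^ μ * |1 - s j * Q α (s j)|‖
        = (s j) ^ μ * |1 - s j * Q α (s j)| := by
          rw [Real.norm_eq_abs, abs_of_nonneg]
          exact mul_nonneg (Real.rpow_nonneg (hs_nonneg j) μ) (abs_nonneg _)
      _ ≤ ωμ α := h
  -- c is in ℓ²
  have hcL : Memℓp c 2 := by
    apply memℓp_gen
    simp only [ENNReal.toReal_ofNat]
    apply Summable.of_nonneg_of_le (fun j => Real.rpow_nonneg (norm_nonneg _) _)
      (fun j => ?_) (hsum_a.mul_left ((‖A‖ ^ μ) ^ (2:ℝ)))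
    rw [← Real.mul_rpow (by positivity) (norm_nonneg _)]
    apply Real.rpow_le_rpow (norm_nonneg _) _ (by norm_num)
    rw [hc, norm_mul, Real.norm_eq_abs (s j ^ μ), abs_of_nonneg (Real.rpow_nonneg (hs_nonneg j) μ)]
    exact mul_le_mul_of_nonneg_right
      (Real.rpow_le_rpow (hs_nonneg j) (hs_le j) hμ.le) (norm_nonneg _)
  -- f = b.repr.symm ⟨c, hcL⟩
  have hFsum : HasSum (fun j => c j • b j) (b.repr.symm ⟨c, hcL⟩) :=
    b.hasSum_repr_symm ⟨c, hcL⟩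
  have hfF : f = b.repr.symm ⟨c, hcL⟩ := by
    rw [hf]; exact hFsum.tsum_eq
  have hcoef : ∀ j, ⟪f, b j⟫ = c j := by
    intro j
    rw [real_inner_comm, ← b.repr_apply_apply, hfF,
      LinearIsometryEquiv.apply_symm_apply]
  -- error coefficients
  set e : ℕ → ℝ := fun j => c j - Q α (s j) * s j * c j with he
  have heL : Memℓp e 2 := by
    apply memℓp_gen
    simp only [ENNReal.toReal_ofNat]
    apply Summable.of_nonneg_of_le (fun j => Real.rpow_nonneg (norm_nonneg _) _)
      (fun j => ?_) (hsum_a.mul_left ((ωμ α) ^ (2:ℝ)))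
    rw [← Real.mul_rpow hωμ0 (norm_nonneg _)]
    exact Real.rpow_le_rpow (norm_nonneg _) (habs j) (by norm_num)
  -- d = c - e
  set d : ℕ → ℝ := fun j => Q α (s j) * s j * c j with hd
  have hdL : Memℓp d 2 := by
    have := hcL.sub heL
    convert this using 1
    ext j; simp [hd, he]
  have hGsum : HasSum (fun j => d j • b j) (b.repr.symm ⟨d, hdL⟩) :=
    b.hasSum_repr_symm ⟨d, hdL⟩
  have hG : (∑' j, (Q α (s j) * s j * ⟪f, b j⟫) • b j) = b.repr.symm ⟨d, hdL⟩ := by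
    rw [← hGsum.tsum_eq]
    congr 1; ext j; rw [hcoef j]
  rw [hG, hfF, ← LinearIsometryEquiv.map_sub, LinearIsometryEquiv.norm_map]
  have hsub : (⟨c, hcL⟩ - ⟨d, hdL⟩ : lp (fun _ : ℕ => ℝ) 2) = ⟨e, heL⟩ := by
    apply lp.ext
    rw [lp.coeFn_sub]
    rfl
  rw [hsub]
  have hesum : Summable fun j => ‖e j‖ ^ (2:ℝ) := by
    have := heL.summable (p := 2) (by norm_num)
    simpa using this
  apply lp.norm_le_of_tsum_le (p := 2) (by norm_num) (mul_nonneg hωμ0 hρ)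
  have hcoe : ∀ j, ((⟨e, heL⟩ : lp (fun _ : ℕ => ℝ) 2) : ∀ _, ℝ) j = e j := fun j => rfl
  simp only [ENNReal.toReal_ofNat, hcoe]
  have key : ∑' j, ‖e j‖ ^ (2:ℝ) ≤ (ωμ α) ^ (2:ℝ) * ∑' j, ‖a j‖ ^ (2:ℝ) := by
    rw [← tsum_mul_left]
    refine Summable.tsum_le_tsum (fun j => ?_) hesum (hsum_a.mul_left _)
    rw [← Real.mul_rpow hωμ0 (norm_nonneg _)]
    exact Real.rpow_le_rpow (norm_nonneg _) (habs j) (by norm_num)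
  have hna : ∑' j, ‖a j‖ ^ (2:ℝ) = ‖ω‖ ^ (2:ℝ) := by
    have h2 := lp.norm_rpow_eq_tsum (p := 2) (by norm_num) (b.repr ω)
    rw [LinearIsometryEquiv.norm_map] at h2
    simp only [ENNReal.toReal_ofNat] at h2
    rw [h2]
    exact tsum_congr fun j => by rw [ha_repr j]
  calc ∑' j, ‖e j‖ ^ (2:ℝ) ≤ (ωμ α) ^ (2:ℝ) * ‖ω‖ ^ (2:ℝ) := by rw [← hna]; exact key
    _ ≤ (ωμ α) ^ (2:ℝ) * ρ ^ (2:ℝ) := by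
        exact mul_le_mul_of_nonneg_left
          (Real.rpow_le_rpow (norm_nonneg _) hω (by norm_num))
          (Real.rpow_nonneg hωμ0 _)
    _ = (ωμ α * ρ) ^ (2:ℝ) := (Real.mul_rpow hωμ0 hρ).symm
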